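/- Let C be a closed convex subset of a Hilbert space H and T : C → C nonexpansive with F(T) ≠ ∅. Let α_n ∈ (0,1) with α_n ≤ 1 − δ for some δ ∈ (0,1]. Define x₀ ∈ C, y_n = α_n x_n + (1−α_n)Tx_n, C_n = {v ∈ C : ‖y_n − v‖ ≤ ‖x_n − v‖}, Q_n = {v ∈ C : ⟨x₀ − x_n, x_n − v⟩ ≥ 0}, x_{n+1} = P_{C_n ∩ Q_n} x₀. Then x_n converges strongly to P_{F(T)} x₀. -/

import Mathlib

open Filter Topology

private lemma nt_mid_norm_sq {H : Type*} [NormedAddCommGroup H] [InnerProductSpace ℝ H]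
    (u y z : H) :
    ‖u - (1/2:ℝ) • (y + z)‖^2 = (‖u - y‖^2 + ‖u - z‖^2)/2 - ‖y - z‖^2/4 := by
  have h1 : u - (1/2:ℝ) • (y + z) = (1/2:ℝ) • ((u - y) + (u - z)) := by
    rw [smul_add]; module
  have h2 : y - z = (u - z) - (u - y) := by abel
  have hp := parallelogram_law_with_norm ℝ (u - y) (u - z)
  have hn : ‖(1/2:ℝ)‖ = 1/2 := by rw [Real.norm_eq_abs]; norm_num
  rw [h1, h2, norm_smul, hn, mul_pow, norm_sub_rev (u - z) (u - y)]
  nlinarith [hp]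

private lemma nt_ultra_lim_exists (U : Ultrafilter ℕ) (f : ℕ → ℝ) (M : ℝ)
    (hf : ∀ n, f n ∈ Set.Icc (-M) M) : ∃ l, Tendsto f (U : Filter ℕ) (nhds l) := by
  obtain ⟨l, -, hl⟩ := (isCompact_Icc (a := -M) (b := M)).ultrafilter_le_nhds (U.map f)
    (by
      rw [Filter.le_principal_iff]
      exact Filter.mem_map.2 (Filter.univ_mem' fun n => hf n))
  exact ⟨l, hl⟩

private lemma nt_tendsto_zero_of_sq {f : ℕ → ℝ} (h0 : ∀ n, 0 ≤ f n)
    (h : Tendsto (fun n => f n ^ 2) atTop (nhds 0)) : Tendsto f atTop (nhds 0) := by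
  have hs : Tendsto (fun n => Real.sqrt (f n ^ 2)) atTop (nhds (Real.sqrt 0)) :=
    (Real.continuous_sqrt.tendsto 0).comp h
  rw [Real.sqrt_zero] at hs
  exact hs.congr fun n => Real.sqrt_sq (h0 n)

/-- Nakajo–Takahashi CQ theorem: strong convergence of the hybrid
Mann projection algorithm for nonexpansive mappings. -/
theorem nakajo_takahashi_strong_convergence
    (H : Type*) [NormedAddCommGroup H] [InnerProductSpace ℝ H] [CompleteSpace H]
    (C : Set H) (hclosed : IsClosed C) (hconv : Convex ℝ C)
    (T : H → H) (hT : Set.MapsTo T C C)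
    (hne : ∀ u ∈ C, ∀ v ∈ C, ‖T u - T v‖ ≤ ‖u - v‖)
    (hfix : {q ∈ C | T q = q}.Nonempty)
    (α : ℕ → ℝ) (hα : ∀ n, α n ∈ Set.Ioo (0:ℝ) 1)
    (δ : ℝ) (hδ : δ ∈ Set.Ioc (0:ℝ) 1) (hαδ : ∀ n, α n ≤ 1 - δ)
    (x y : ℕ → H) (x₀ : H) (hx₀ : x 0 = x₀) (hx₀C : x₀ ∈ C)
    (hy : ∀ n, y n = α n • x n + (1 - α n) • T (x n))
    (Cs Qs : ℕ → Set H)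
    (hCs : ∀ n, Cs n = {v ∈ C | ‖y n - v‖ ≤ ‖x n - v‖})
    (hQs : ∀ n, Qs n = {v ∈ C | (inner ℝ (x₀ - x n) (x n - v) : ℝ) ≥ 0})
    (hxproj : ∀ n, x (n + 1) ∈ Cs n ∩ Qs n ∧
        ∀ v ∈ Cs n ∩ Qs n, ‖x₀ - x (n + 1)‖ ≤ ‖x₀ - v‖) :
    ∃ q, (q ∈ C ∧ T q = q) ∧ (∀ p ∈ C, T p = p → ‖x₀ - q‖ ≤ ‖x₀ - p‖) ∧
      Filter.Tendsto x Filter.atTop (nhds q) := by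
  -- basic membership facts
  have hxC : ∀ n, x n ∈ C := by
    intro n
    cases n with
    | zero => rw [hx₀]; exact hx₀C
    | succ m =>
      have := (hxproj m).1.1
      rw [hCs m] at this
      exact this.1
  -- fixed points belong to every Cs n
  have hCsF : ∀ p ∈ C, T p = p → ∀ n, p ∈ Cs n := by
    intro p hpC hpT n
    rw [hCs n]
    refine ⟨hpC, ?_⟩
    have hy1 : y n - p = α n • (x n - p) + (1 - α n) • (T (x n) - p) := by
      rw [hy n]; module
    have hα0 := (hα n).1
    have hα1 := (hα n).2
    calc ‖y n - p‖ ≤ ‖α n • (x n - p)‖ + ‖(1 - α n) • (T (x n) - p)‖ := by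
          rw [hy1]; exact norm_add_le _ _
      _ = α n * ‖x n - p‖ + (1 - α n) * ‖T (x n) - T p‖ := by
          rw [norm_smul, norm_smul, Real.norm_eq_abs, Real.norm_eq_abs,
            abs_of_pos hα0, abs_of_pos (by linarith), hpT]
      _ ≤ α n * ‖x n - p‖ + (1 - α n) * ‖x n - p‖ := by
          have := hne (x n) (hxC n) p hpC
          nlinarith
      _ = ‖x n - p‖ := by ring
  -- convexity of Cs n and Qs n
  have hCsconv : ∀ n, Convex ℝ (Cs n) := by
    intro n
    have heq : Cs n = C ∩ {v | (inner ℝ (x n - y n) v : ℝ) ≤ (‖x n‖^2 - ‖y n‖^2)/2} := by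
      rw [hCs n]
      ext v
      simp only [Set.mem_setOf_eq, Set.mem_inter_iff, Set.sep_setOf]
      constructor
      · rintro ⟨h1, h2⟩
        refine ⟨h1, ?_⟩
        have e1 := norm_sub_sq_real (y n) v
        have e2 := norm_sub_sq_real (x n) v
        have h3 : ‖y n - v‖^2 ≤ ‖x n - v‖^2 := pow_le_pow_left₀ (norm_nonneg _) h2 2
        show (inner ℝ (x n - y n) v : ℝ) ≤ (‖x n‖^2 - ‖y n‖^2)/2
        rw [inner_sub_left]
        linarith
      · rintro ⟨h1, h2⟩
        refine ⟨h1, ?_⟩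
        have e1 := norm_sub_sq_real (y n) v
        have e2 := norm_sub_sq_real (x n) v
        have h2 : (inner ℝ (x n - y n) v : ℝ) ≤ (‖x n‖^2 - ‖y n‖^2)/2 := h2
        rw [inner_sub_left] at h2
        have h3 : ‖y n - v‖^2 ≤ ‖x n - v‖^2 := by linarith
        exact le_of_pow_le_pow_left₀ two_ne_zero (norm_nonneg _) h3
    rw [heq]
    exact hconv.inter (convex_halfSpace_le
      ⟨fun a b => inner_add_right _ _ _, fun c a => real_inner_smul_right _ _ _⟩ _)
  have hQsconv : ∀ n, Convex ℝ (Qs n) := by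
    intro n
    have heq : Qs n = C ∩ {v | (inner ℝ (x₀ - x n) v : ℝ) ≤ (inner ℝ (x₀ - x n) (x n) : ℝ)} := by
      rw [hQs n]
      ext v
      simp only [Set.mem_setOf_eq, Set.mem_inter_iff, Set.sep_setOf]
      constructor
      · rintro ⟨h1, h2⟩
        refine ⟨h1, ?_⟩
        have h2 : (inner ℝ (x₀ - x n) (x n - v) : ℝ) ≥ 0 := h2
        rw [inner_sub_right] at h2
        show (inner ℝ (x₀ - x n) v : ℝ) ≤ (inner ℝ (x₀ - x n) (x n) : ℝ)
        linarith
      · rintro ⟨h1, h2⟩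
        refine ⟨h1, ?_⟩
        have h2 : (inner ℝ (x₀ - x n) v : ℝ) ≤ (inner ℝ (x₀ - x n) (x n) : ℝ) := h2
        show (inner ℝ (x₀ - x n) (x n - v) : ℝ) ≥ 0
        rw [inner_sub_right]
        linarith
    rw [heq]
    exact hconv.inter (convex_halfSpace_le
      ⟨fun a b => inner_add_right _ _ _, fun c a => real_inner_smul_right _ _ _⟩ _)
  -- variational inequality from minimality
  have hvar : ∀ n, ∀ p ∈ Cs n ∩ Qs n, (inner ℝ (x₀ - x (n+1)) (p - x (n+1)) : ℝ) ≤ 0 := by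
    intro n p hp
    have hmem := (hxproj n).1
    have hconvD : Convex ℝ (Cs n ∩ Qs n) := (hCsconv n).inter (hQsconv n)
    have : Nonempty (Cs n ∩ Qs n : Set H) := ⟨⟨x (n+1), hmem⟩⟩
    have hbdd : BddBelow (Set.range fun w : (Cs n ∩ Qs n : Set H) => ‖x₀ - (w : H)‖) := by
      refine ⟨0, ?_⟩
      rintro r ⟨w, rfl⟩
      exact norm_nonneg _
    have hinf : ‖x₀ - x (n+1)‖ = ⨅ w : (Cs n ∩ Qs n : Set H), ‖x₀ - (w : H)‖ :=
      le_antisymm (le_ciInf fun w => (hxproj n).2 w w.2)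
        (ciInf_le hbdd ⟨x (n+1), hmem⟩)
    exact (norm_eq_iInf_iff_real_inner_le_zero hconvD hmem).1 hinf p hp
  -- fixed points belong to every Qs n
  have hQF : ∀ n, ∀ p ∈ C, T p = p → p ∈ Qs n := by
    intro n
    induction n with
    | zero =>
      intro p hpC hpT
      rw [hQs 0, hx₀]
      exact ⟨hpC, by simp⟩
    | succ m ih =>
      intro p hpC hpT
      have hpD : p ∈ Cs m ∩ Qs m := ⟨hCsF p hpC hpT m, ih p hpC hpT⟩
      have := hvar m p hpD
      rw [hQs (m+1)]
      refine ⟨hpC, ?_⟩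
      have he : x (m+1) - p = -(p - x (m+1)) := by abel
      rw [he, inner_neg_right]
      linarith
  -- key inequality on Qs n
  have hQkey : ∀ n, ∀ v ∈ Qs n, ‖x₀ - x n‖^2 + ‖x n - v‖^2 ≤ ‖x₀ - v‖^2 := by
    intro n v hv
    rw [hQs n] at hv
    have h2 := hv.2
    have he : x₀ - v = (x₀ - x n) + (x n - v) := by abel
    rw [he, norm_add_sq_real]
    linarith
  -- the sequence a n = ‖x₀ - x n‖
  set a : ℕ → ℝ := fun n => ‖x₀ - x n‖ with ha_def
  have ha0 : ∀ n, 0 ≤ a n := fun n => norm_nonneg _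
  have hmono : Monotone a := by
    refine monotone_nat_of_le_succ fun n => ?_
    have := hQkey n (x (n+1)) (hxproj n).1.2
    have h2 : a n ^ 2 ≤ a (n+1) ^ 2 := by nlinarith [sq_nonneg ‖x n - x (n+1)‖]
    exact le_of_pow_le_pow_left₀ two_ne_zero (ha0 (n+1)) h2
  obtain ⟨p₀, hp₀C, hp₀T⟩ := hfix
  have hbd : ∀ p ∈ C, T p = p → ∀ n, a n ≤ ‖x₀ - p‖ := by
    intro p hpC hpT n
    have := hQkey n p (hQF n p hpC hpT)
    have h2 : a n ^ 2 ≤ ‖x₀ - p‖ ^ 2 := by nlinarith [sq_nonneg ‖x n - p‖]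
    exact le_of_pow_le_pow_left₀ two_ne_zero (norm_nonneg _) h2
  have hbdd : BddAbove (Set.range a) := by
    refine ⟨‖x₀ - p₀‖, ?_⟩
    rintro r ⟨n, rfl⟩
    exact hbd p₀ hp₀C hp₀T n
  set A : ℝ := ⨆ n, a n with hA_def
  have htendA : Tendsto a atTop (nhds A) := tendsto_atTop_ciSup hmono hbdd
  have haA : ∀ n, a n ≤ A := fun n => le_ciSup hbdd n
  have hA0 : 0 ≤ A := le_trans (ha0 0) (haA 0)
  -- consecutive differences tend to 0
  have hsq : Tendsto (fun n => ‖x n - x (n+1)‖ ^ 2) atTop (nhds 0) := by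
    have hub : ∀ n, ‖x n - x (n+1)‖ ^ 2 ≤ a (n+1) ^ 2 - a n ^ 2 := by
      intro n
      have := hQkey n (x (n+1)) (hxproj n).1.2
      linarith
    have htend : Tendsto (fun n => a (n+1) ^ 2 - a n ^ 2) atTop (nhds 0) := by
      have h1 : Tendsto (fun n => a (n+1) ^ 2) atTop (nhds (A ^ 2)) :=
        ((htendA.comp (tendsto_add_atTop_nat 1)).pow 2)
      have h2 : Tendsto (fun n => a n ^ 2) atTop (nhds (A ^ 2)) := htendA.pow 2
      have := h1.sub h2
      rwa [sub_self] at this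
    exact tendsto_of_tendsto_of_tendsto_of_le_of_le tendsto_const_nhds htend
      (fun n => sq_nonneg _) hub
  have hxx : Tendsto (fun n => ‖x n - x (n+1)‖) atTop (nhds 0) :=
    nt_tendsto_zero_of_sq (fun n => norm_nonneg _) hsq
  -- approximate fixed point property
  have hε : Tendsto (fun n => ‖x n - T (x n)‖) atTop (nhds 0) := by
    have hub : ∀ n, ‖x n - T (x n)‖ ≤ (2/δ) * ‖x n - x (n+1)‖ := by
      intro n
      have hα1 := (hα n).2
      have hδ0 := hδ.1
      have hαδn := hαδ n
      have he : x n - y n = (1 - α n) • (x n - T (x n)) := by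
        rw [hy n]; module
      have h1 : ‖x n - y n‖ = (1 - α n) * ‖x n - T (x n)‖ := by
        rw [he, norm_smul, Real.norm_eq_abs, abs_of_pos (by linarith)]
      have h2 : ‖y n - x (n+1)‖ ≤ ‖x n - x (n+1)‖ := by
        have := (hxproj n).1.1
        rw [hCs n] at this
        exact this.2
      have h3 : ‖x n - y n‖ ≤ ‖x n - x (n+1)‖ + ‖x (n+1) - y n‖ := by
        have := norm_add_le (x n - x (n+1)) (x (n+1) - y n)
        simpa using this
      rw [norm_sub_rev (x (n+1)) (y n)] at h3
      have h4 : δ * ‖x n - T (x n)‖ ≤ (1 - α n) * ‖x n - T (x n)‖ := by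
        nlinarith [norm_nonneg (x n - T (x n))]
      rw [div_mul_eq_mul_div, le_div_iff₀ hδ0]
      nlinarith
    refine tendsto_of_tendsto_of_tendsto_of_le_of_le tendsto_const_nhds ?_
      (fun n => norm_nonneg _) hub
    have := hxx.const_mul (2/δ)
    simpa using this
  -- ultrafilter limits: the asymptotic center function φ
  set U : Ultrafilter ℕ := Ultrafilter.of atTop with hU_def
  have hU : (U : Filter ℕ) ≤ atTop := Ultrafilter.of_le _
  have hxbound : ∀ z : H, ∀ n, ‖x n - z‖ ≤ ‖x₀ - p₀‖ + ‖x₀ - z‖ := by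
    intro z n
    calc ‖x n - z‖ ≤ ‖x n - x₀‖ + ‖x₀ - z‖ := norm_sub_le_norm_sub_add_norm_sub _ _ _
      _ ≤ ‖x₀ - p₀‖ + ‖x₀ - z‖ := by
          rw [norm_sub_rev]
          have := hbd p₀ hp₀C hp₀T n
          linarith
  have hφex : ∀ z : H, ∃ l, Tendsto (fun n => ‖x n - z‖^2) (U : Filter ℕ) (nhds l) := by
    intro z
    refine nt_ultra_lim_exists U _ ((‖x₀ - p₀‖ + ‖x₀ - z‖)^2) fun n => ?_
    constructor
    · nlinarith [sq_nonneg ‖x n - z‖, sq_nonneg (‖x₀ - p₀‖ + ‖x₀ - z‖)]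
    · exact pow_le_pow_left₀ (norm_nonneg _) (hxbound z n) 2
  set φ : H → ℝ := fun z => limUnder (U : Filter ℕ) (fun n => ‖x n - z‖^2) with hφ_def
  have hφ : ∀ z, Tendsto (fun n => ‖x n - z‖^2) (U : Filter ℕ) (nhds (φ z)) :=
    fun z => tendsto_nhds_limUnder (hφex z)
  have hφ0 : ∀ z, 0 ≤ φ z := fun z =>
    le_of_tendsto_of_tendsto' tendsto_const_nhds (hφ z) fun n => sq_nonneg _
  have hφmid : ∀ u v : H, φ ((1/2:ℝ) • (u + v)) = (φ u + φ v)/2 - ‖u - v‖^2/4 := by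
    intro u v
    have h2 : Tendsto (fun n => (‖x n - u‖^2 + ‖x n - v‖^2)/2 - ‖u - v‖^2/4)
        (U : Filter ℕ) (nhds ((φ u + φ v)/2 - ‖u - v‖^2/4)) :=
      (((hφ u).add (hφ v)).div_const 2).sub tendsto_const_nhds
    refine tendsto_nhds_unique ((hφ ((1/2:ℝ) • (u + v))).congr fun n => ?_) h2
    exact nt_mid_norm_sq (x n) u v
  -- infimum over C and minimizing sequence
  set mφ : ℝ := sInf (φ '' C) with hmφ_def
  have hSne : (φ '' C).Nonempty := ⟨φ x₀, x₀, hx₀C, rfl⟩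
  have hSbd : BddBelow (φ '' C) := ⟨0, by rintro r ⟨v, -, rfl⟩; exact hφ0 v⟩
  have hmφle : ∀ v ∈ C, mφ ≤ φ v := fun v hv => csInf_le hSbd ⟨v, hv, rfl⟩
  have hzex : ∀ k : ℕ, ∃ z, z ∈ C ∧ φ z < mφ + 1/(k+1) := by
    intro k
    have hlt : mφ < mφ + 1/(k+1) := by
      have : (0:ℝ) < 1/(k+1) := by positivity
      linarith
    obtain ⟨b, ⟨z, hzC, rfl⟩, hb⟩ := (csInf_lt_iff hSbd hSne).1 hlt
    exact ⟨z, hzC, hb⟩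
  choose z hzC hzφ using hzex
  -- the minimizing sequence is Cauchy
  have hcauchy : CauchySeq z := by
    refine cauchySeq_of_le_tendsto_0 (fun N => Real.sqrt (4/(N+1))) (fun j k N hj hk => ?_) ?_
    · have hmid : (1/2:ℝ) • (z j + z k) ∈ C := by
        have := hconv (hzC j) (hzC k) (by norm_num : (0:ℝ) ≤ 1/2)
          (by norm_num : (0:ℝ) ≤ 1/2) (by norm_num)
        simpa [smul_add] using this
      have h1 : mφ ≤ φ ((1/2:ℝ) • (z j + z k)) := hmφle _ hmid
      rw [hφmid] at h1
      have h2 := hzφ j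
      have h3 := hzφ k
      have hj1 : (1:ℝ)/(j+1) ≤ 1/(N+1) := by
        apply one_div_le_one_div_of_le (by positivity)
        have : (N:ℝ) ≤ j := Nat.cast_le.2 hj
        linarith
      have hk1 : (1:ℝ)/(k+1) ≤ 1/(N+1) := by
        apply one_div_le_one_div_of_le (by positivity)
        have : (N:ℝ) ≤ k := Nat.cast_le.2 hk
        linarith
      have hsq : ‖z j - z k‖^2 ≤ 4/(N+1) := by
        have h6 : ‖z j - z k‖^2/4 ≤ (1/(j+1) + 1/(k+1))/2 := by linarith
        have h7 : (4:ℝ)/(N+1) = 4*(1/(N+1)) := by ring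
        rw [h7]
        linarith
      rw [dist_eq_norm]
      calc ‖z j - z k‖ = Real.sqrt (‖z j - z k‖^2) := (Real.sqrt_sq (norm_nonneg _)).symm
        _ ≤ Real.sqrt (4/(N+1)) := Real.sqrt_le_sqrt hsq
    · have h4 : Tendsto (fun N : ℕ => 4/((N:ℝ)+1)) atTop (nhds 0) := by
        have := tendsto_one_div_add_atTop_nhds_zero_nat.const_mul (4:ℝ)
        simpa [div_eq_mul_inv, mul_comm] using this
      have h5 := (Real.continuous_sqrt.tendsto 0).comp h4
      rw [Real.sqrt_zero] at h5
      exact h5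
  obtain ⟨z₀, hz₀⟩ := cauchySeq_tendsto_of_complete hcauchy
  have hz₀C : z₀ ∈ C := hclosed.mem_of_tendsto hz₀ (Eventually.of_forall hzC)
  -- φ z₀ ≤ mφ (continuity argument)
  have hφz₀ : φ z₀ ≤ mφ := by
    have hstep : ∀ k, φ z₀ ≤ φ (z k) + 2*(‖x₀ - p₀‖ + ‖x₀ - z k‖)*‖z k - z₀‖ + ‖z k - z₀‖^2 := by
      intro k
      refine le_of_tendsto_of_tendsto' (hφ z₀)
        (((hφ (z k)).add tendsto_const_nhds).add tendsto_const_nhds) fun n => ?_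
      have ht : ‖x n - z₀‖ ≤ ‖x n - z k‖ + ‖z k - z₀‖ := norm_sub_le_norm_sub_add_norm_sub _ _ _
      have hb := hxbound (z k) n
      nlinarith [norm_nonneg (x n - z₀), norm_nonneg (x n - z k), norm_nonneg (z k - z₀)]
    have hd : Tendsto (fun k => ‖z k - z₀‖) atTop (nhds 0) :=
      tendsto_iff_norm_sub_tendsto_zero.1 hz₀
    have hnz : Tendsto (fun k => ‖x₀ - z k‖) atTop (nhds ‖x₀ - z₀‖) :=
      (tendsto_const_nhds.sub hz₀).norm
    have hφzk : Tendsto (fun k => φ (z k)) atTop (nhds mφ) := by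
      refine tendsto_of_tendsto_of_tendsto_of_le_of_le tendsto_const_nhds ?_
        (fun k => hmφle _ (hzC k)) (fun k => le_of_lt (hzφ k))
      have h1 : Tendsto (fun k : ℕ => 1/((k:ℝ)+1)) atTop (nhds 0) :=
        tendsto_one_div_add_atTop_nhds_zero_nat
      have := (tendsto_const_nhds (x := mφ) (f := atTop (α := ℕ))).add h1
      simpa using this
    have hRHS : Tendsto (fun k => φ (z k) + 2*(‖x₀ - p₀‖ + ‖x₀ - z k‖)*‖z k - z₀‖ + ‖z k - z₀‖^2)
        atTop (nhds (mφ + 2*(‖x₀ - p₀‖ + ‖x₀ - z₀‖)*0 + 0^2)) := by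
      exact (hφzk.add ((((tendsto_const_nhds.add hnz).const_mul 2)).mul hd)).add (hd.pow 2)
    have := ge_of_tendsto hRHS (Eventually.of_forall hstep)
    simpa using this
  have hφmin : ∀ v ∈ C, φ z₀ ≤ φ v := fun v hv => le_trans hφz₀ (hmφle v hv)
  -- z₀ is a fixed point
  have hφT : φ (T z₀) ≤ φ z₀ := by
    have hε' : Tendsto (fun n => ‖x n - T (x n)‖) (U : Filter ℕ) (nhds 0) := hε.mono_left hU
    have hRHS : Tendsto (fun n => ‖x n - T (x n)‖^2
        + 2*‖x n - T (x n)‖*(‖x₀ - p₀‖ + ‖x₀ - z₀‖) + ‖x n - z₀‖^2) (U : Filter ℕ)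
        (nhds (0^2 + 2*0*(‖x₀ - p₀‖ + ‖x₀ - z₀‖) + φ z₀)) :=
      ((hε'.pow 2).add ((hε'.const_mul 2).mul_const _)).add (hφ z₀)
    have hineq : ∀ n, ‖x n - T z₀‖^2 ≤ ‖x n - T (x n)‖^2
        + 2*‖x n - T (x n)‖*(‖x₀ - p₀‖ + ‖x₀ - z₀‖) + ‖x n - z₀‖^2 := by
      intro n
      have h1 : ‖x n - T z₀‖ ≤ ‖x n - T (x n)‖ + ‖T (x n) - T z₀‖ :=
        norm_sub_le_norm_sub_add_norm_sub _ _ _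
      have h2 : ‖T (x n) - T z₀‖ ≤ ‖x n - z₀‖ := hne (x n) (hxC n) z₀ hz₀C
      have h3 := hxbound z₀ n
      nlinarith [norm_nonneg (x n - T z₀), norm_nonneg (x n - T (x n)),
        norm_nonneg (x n - z₀), norm_nonneg (T (x n) - T z₀)]
    have := le_of_tendsto_of_tendsto' (hφ (T z₀)) hRHS hineq
    simpa using this
  have hTz₀ : T z₀ = z₀ := by
    have hTz₀C : T z₀ ∈ C := hT hz₀C
    have hmidC : (1/2:ℝ) • (z₀ + T z₀) ∈ C := by
      have := hconv hz₀C hTz₀C (by norm_num : (0:ℝ) ≤ 1/2)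
        (by norm_num : (0:ℝ) ≤ 1/2) (by norm_num)
      simpa [smul_add] using this
    have h1 : φ z₀ ≤ φ ((1/2:ℝ) • (z₀ + T z₀)) := hφmin _ hmidC
    rw [hφmid z₀ (T z₀)] at h1
    have h2 : ‖z₀ - T z₀‖^2 ≤ 0 := by linarith
    have h4 : ‖z₀ - T z₀‖^2 = 0 := le_antisymm h2 (sq_nonneg _)
    have h5 : z₀ - T z₀ = 0 :=
      norm_eq_zero.1 ((pow_eq_zero_iff two_ne_zero).1 h4)
    exact (sub_eq_zero.1 h5).symm
  -- z₀ lies in the closed ball of radius A around x₀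
  have hz₀ball : ‖x₀ - z₀‖ ≤ A := by
    set K : Set H := C ∩ Metric.closedBall x₀ A with hK_def
    have hKconv : Convex ℝ K := hconv.inter (convex_closedBall x₀ A)
    have hKcomplete : IsComplete K := (hclosed.inter Metric.isClosed_closedBall).isComplete
    have hxK : ∀ n, x n ∈ K := by
      intro n
      refine ⟨hxC n, ?_⟩
      rw [Metric.mem_closedBall, dist_eq_norm, norm_sub_rev]
      exact haA n
    have hKne : K.Nonempty := ⟨x 0, hxK 0⟩
    obtain ⟨w, hwK, hwinf⟩ := exists_norm_eq_iInf_of_complete_convex hKne hKcomplete hKconv z₀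
    have hw := (norm_eq_iInf_iff_real_inner_le_zero hKconv hwK).1 hwinf
    have hptw : ∀ n, ‖x n - w‖^2 + ‖w - z₀‖^2 ≤ ‖x n - z₀‖^2 := by
      intro n
      have h1 : (inner ℝ (z₀ - w) (x n - w) : ℝ) ≤ 0 := hw (x n) (hxK n)
      have h2 : (inner ℝ (x n - w) (w - z₀) : ℝ) = -(inner ℝ (z₀ - w) (x n - w) : ℝ) := by
        rw [show w - z₀ = -(z₀ - w) by abel, inner_neg_right, real_inner_comm]
      have he : x n - z₀ = (x n - w) + (w - z₀) := by abel
      rw [he, norm_add_sq_real]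
      linarith
    have hle : φ w + ‖w - z₀‖^2 ≤ φ z₀ :=
      le_of_tendsto_of_tendsto' ((hφ w).add tendsto_const_nhds) (hφ z₀) hptw
    have hge : φ z₀ ≤ φ w := hφmin w hwK.1
    have hw0 : ‖w - z₀‖^2 = 0 := le_antisymm (by linarith) (sq_nonneg _)
    have hwz : w = z₀ := sub_eq_zero.1 (norm_eq_zero.1 ((pow_eq_zero_iff two_ne_zero).1 hw0))
    have hz₀K : z₀ ∈ K := hwz ▸ hwK
    have := hz₀K.2
    rw [Metric.mem_closedBall, dist_eq_norm, norm_sub_rev] at this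
    exact this
  -- conclusion
  refine ⟨z₀, ⟨hz₀C, hTz₀⟩, ?_, ?_⟩
  · intro p hpC hpT
    exact le_trans hz₀ball (ciSup_le (hbd p hpC hpT))
  · rw [tendsto_iff_norm_sub_tendsto_zero]
    have hkey : ∀ n, ‖x n - z₀‖^2 ≤ A^2 - a n^2 := by
      intro n
      have h1 := hQkey n z₀ (hQF n z₀ hz₀C hTz₀)
      have h2 : ‖x₀ - z₀‖^2 ≤ A^2 := pow_le_pow_left₀ (norm_nonneg _) hz₀ball 2
      have h3 : a n = ‖x₀ - x n‖ := rfl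
      rw [h3]
      linarith
    have hsq2 : Tendsto (fun n => ‖x n - z₀‖^2) atTop (nhds 0) := by
      have htend : Tendsto (fun n => A^2 - a n^2) atTop (nhds (A^2 - A^2)) :=
        tendsto_const_nhds.sub (htendA.pow 2)
      rw [sub_self] at htend
      exact tendsto_of_tendsto_of_tendsto_of_le_of_le tendsto_const_nhds htend
        (fun n => sq_nonneg _) hkey
    exact nt_tendsto_zero_of_sq (fun n => norm_nonneg _) hsq2
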